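/- For a fixed nominal positive semidefinite matrix Ẑ and radius ρ ≥ 0, the set {Z ∈ S_+^d : G(Z,Ẑ) ≤ ρ} equals the set of Z ∈ S_+^d for which there exists E ∈ S_+^d with Tr(Z + Ẑ - 2E) ≤ ρ² and the block matrix [[Ẑ^{1/2} Z Ẑ^{1/2}, E],[E, I]] positive semidefinite. -/

import Mathlib

open Matrix

/-- The positive semidefinite square root of a matrix (zero if the matrix is
not positive semidefinite). -/
noncomputable def psdSqrt {d : ℕ} (A : Matrix (Fin d) (Fin d) ℝ) :
    Matrix (Fin d) (Fin d) ℝ := by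
  classical exact if h : A.PosSemidef then
    (h.1.eigenvectorUnitary.1 * diagonal ((↑) ∘ (√·) ∘ h.1.eigenvalues) *
      (star h.1.eigenvectorUnitary : Matrix (Fin d) (Fin d) ℝ)) else 0

/-- The Gelbrich distance between covariance matrices. -/
noncomputable def gelbrich {d : ℕ} (S1 S2 : Matrix (Fin d) (Fin d) ℝ) : ℝ :=
  Real.sqrt (S1 + S2 - (2 : ℝ) • psdSqrt (psdSqrt S2 * S1 * psdSqrt S2)).trace

open scoped MatrixOrder

lemma psdSqrt_eq {d : ℕ} {A : Matrix (Fin d) (Fin d) ℝ} (h : A.PosSemidef) :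
    psdSqrt A = CFC.sqrt A := by
  rw [psdSqrt, dif_pos h, CFC.sqrt_eq_cfc, cfc_nnreal_eq_real _ A, h.1.cfc_eq]
  simp [IsHermitian.cfc, Unitary.conjStarAlgAut_apply, Function.comp_def,
    max_eq_left (h.eigenvalues_nonneg _)]

section helpers

variable {n : Type*} [Fintype n] [DecidableEq n]

lemma myTrace_nonneg {A : Matrix n n ℝ} (hA : A.PosSemidef) : 0 ≤ A.trace := by
  rw [Matrix.trace]
  apply Finset.sum_nonneg
  intro i _
  exact hA.diag_nonneg

lemma myTrace_mul_nonneg {A B : Matrix n n ℝ} (hA : A.PosSemidef) (hB : B.PosSemidef) :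
    0 ≤ (A * B).trace := by
  have hSsq : CFC.sqrt A * CFC.sqrt A = A := CFC.sqrt_mul_sqrt_self A hA.nonneg
  have h1 : (CFC.sqrt A * B * CFC.sqrt A).PosSemidef := by
    have := hB.conjTranspose_mul_mul_same (CFC.sqrt A)
    rwa [(CFC.sqrt_nonneg A).posSemidef.1] at this
  calc (0:ℝ) ≤ (CFC.sqrt A * B * CFC.sqrt A).trace := myTrace_nonneg h1
    _ = (A * B).trace := by
        rw [Matrix.trace_mul_cycle, hSsq]

lemma myPosSemidef_smul {A : Matrix n n ℝ} (hA : A.PosSemidef) {c : ℝ} (hc : 0 ≤ c) :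
    (c • A).PosSemidef := by
  refine ⟨?_, fun x => ?_⟩
  · show (c • A)ᴴ = c • A
    rw [Matrix.conjTranspose_smul, hA.1]
    simp
  · exact (hA.smul hc).2 x

lemma myTrace_fromBlocks {m : Type*} [Fintype m]
    (A : Matrix n n ℝ) (B : Matrix n m ℝ) (C : Matrix m n ℝ) (D : Matrix m m ℝ) :
    (Matrix.fromBlocks A B C D).trace = A.trace + D.trace := by
  simp [Matrix.trace, Fintype.sum_sum_type, Matrix.diag]

end helpers

/-- SDP representation of the Gelbrich ball: for a nominal positive
semidefinite matrix `Zh` and radius `ρ ≥ 0`, the set of positive semidefinite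
`Z` with `G(Z, Zh) ≤ ρ` coincides with the set of positive semidefinite `Z`
for which there is `E ⪰ 0` with `Tr(Z + Zh - 2E) ≤ ρ²` and
`[[Zh^{1/2} Z Zh^{1/2}, E], [E, I]] ⪰ 0`. -/
theorem gelbrich_ball_sdp_representation {d : ℕ}
    (Zh : Matrix (Fin d) (Fin d) ℝ) (hZh : Zh.PosSemidef)
    (ρ : ℝ) (hρ : 0 ≤ ρ) :
    {Z : Matrix (Fin d) (Fin d) ℝ | Z.PosSemidef ∧ gelbrich Z Zh ≤ ρ} =
    {Z : Matrix (Fin d) (Fin d) ℝ | Z.PosSemidef ∧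
      ∃ E : Matrix (Fin d) (Fin d) ℝ, E.PosSemidef ∧
        (Z + Zh - (2 : ℝ) • E).trace ≤ ρ ^ 2 ∧
        (Matrix.fromBlocks (psdSqrt Zh * Z * psdSqrt Zh) E E 1).PosSemidef} := by
  have hS0psd : (psdSqrt Zh).PosSemidef := by
    unfold psdSqrt
    rw [dif_pos hZh]
    have := (CFC.sqrt_nonneg Zh).posSemidef
    rwa [← psdSqrt_eq hZh, psdSqrt, dif_pos hZh] at this
  ext Z
  simp only [Set.mem_setOf_eq]
  constructor
  · rintro ⟨hZ, hG⟩
    refine ⟨hZ, ?_⟩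
    have hM : (psdSqrt Zh * Z * psdSqrt Zh).PosSemidef := by
      have := hZ.conjTranspose_mul_mul_same (psdSqrt Zh)
      rwa [hS0psd.1] at this
    set M := psdSqrt Zh * Z * psdSqrt Zh with hMdef
    set S := psdSqrt M with hSdef
    have hSeq : S = CFC.sqrt M := psdSqrt_eq hM
    have hS : S.PosSemidef := by rw [hSeq]; exact (CFC.sqrt_nonneg M).posSemidef
    have hSS : S * S = M := by rw [hSeq]; exact CFC.sqrt_mul_sqrt_self M hM.nonneg
    refine ⟨S, hS, ?_, ?_⟩
    · -- trace bound
      have hG' : Real.sqrt ((Z + Zh - (2:ℝ) • S).trace) ≤ ρ := hG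
      set t := (Z + Zh - (2:ℝ) • S).trace with htdef
      rcases le_or_gt 0 t with h | h
      · nlinarith [Real.sq_sqrt h, Real.sqrt_nonneg t]
      · nlinarith
    · -- block PSD
      have hkey : Matrix.fromBlocks M S S 1 =
          (Matrix.fromBlocks S 1 0 0)ᴴ * Matrix.fromBlocks S 1 0 0 := by
        have hST : Sᵀ = S := by
          have h : Sᴴ = S := hS.1
          rwa [Matrix.conjTranspose_eq_transpose_of_trivial] at h
        rw [Matrix.fromBlocks_conjTranspose, Matrix.fromBlocks_multiply]
        simp [hSS, hST]
      rw [hkey]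
      exact Matrix.posSemidef_conjTranspose_mul_self _
  · rintro ⟨hZ, E, hE, htr, hblock⟩
    refine ⟨hZ, ?_⟩
    have hM : (psdSqrt Zh * Z * psdSqrt Zh).PosSemidef := by
      have := hZ.conjTranspose_mul_mul_same (psdSqrt Zh)
      rwa [hS0psd.1] at this
    set M := psdSqrt Zh * Z * psdSqrt Zh with hMdef
    set S := psdSqrt M with hSdef
    have hSeq : S = CFC.sqrt M := psdSqrt_eq hM
    have hS : S.PosSemidef := by rw [hSeq]; exact (CFC.sqrt_nonneg M).posSemidef
    have hSS : S * S = M := by rw [hSeq]; exact CFC.sqrt_mul_sqrt_self M hM.nonneg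
    -- Schur complement: M - E * E ⪰ 0 (not needed explicitly, we go via traces)
    -- Key claim: Tr E ≤ Tr S + ε d for every ε > 0
    have hkey : ∀ ε : ℝ, 0 < ε →
        E.trace ≤ S.trace + ε * (Fintype.card (Fin d) : ℝ) := by
      intro ε hε
      set Sε := S + ε • (1 : Matrix (Fin d) (Fin d) ℝ) with hSεdef
      have h1pd : (ε • (1 : Matrix (Fin d) (Fin d) ℝ)).PosDef := by
        rw [Matrix.smul_one_eq_diagonal]
        exact Matrix.posDef_diagonal_iff.mpr fun _ => hε
      have hSεpd : Sε.PosDef := Matrix.PosDef.posSemidef_add hS h1pd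
      have hdet : IsUnit Sε.det := isUnit_iff_ne_zero.mpr hSεpd.det_pos.ne'
      haveI : Invertible Sε := Sε.invertibleOfIsUnitDet hdet
      have hSεinv : Sε⁻¹.PosSemidef := hSεpd.inv.posSemidef
      -- the certificate matrix Q
      have h0 : (Sε⁻¹ - (-1) * Sε⁻¹ * (-1 : Matrix (Fin d) (Fin d) ℝ)ᴴ).PosSemidef := by
        simpa using (Matrix.PosSemidef.zero :
          (0 : Matrix (Fin d) (Fin d) ℝ).PosSemidef)
      have hQ : (Matrix.fromBlocks Sε⁻¹ (-1) (-1) Sε).PosSemidef := by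
        have := (Matrix.PosDef.fromBlocks₂₂ Sε⁻¹ (-1) hSεpd).mpr h0
        simpa using this
      have htr1 : 0 ≤ ((Matrix.fromBlocks M E E 1) *
          (Matrix.fromBlocks Sε⁻¹ (-1) (-1) Sε)).trace :=
        myTrace_mul_nonneg hblock hQ
      have htr2 : ((Matrix.fromBlocks M E E 1) *
          (Matrix.fromBlocks Sε⁻¹ (-1) (-1) Sε)).trace =
          (M * Sε⁻¹).trace - E.trace + (Sε.trace - E.trace) := by
        rw [Matrix.fromBlocks_multiply, myTrace_fromBlocks]
        simp [Matrix.trace_add, Matrix.trace_neg, Matrix.mul_neg, Matrix.mul_one,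
          Matrix.one_mul, Matrix.trace_sub]
        ring
      -- M ⪯ Sε² at the trace-against-Sε⁻¹ level
      have hdiff : Sε * Sε - M = ε • S + (ε • S + (ε * ε) • (1 : Matrix (Fin d) (Fin d) ℝ)) := by
        rw [← hSS, hSεdef]
        simp only [add_mul, mul_add, smul_mul_assoc, mul_smul_comm, smul_smul,
          Matrix.mul_one, Matrix.one_mul, smul_add]
        module
      have hdpsd : (Sε * Sε - M).PosSemidef := by
        rw [hdiff]
        exact (myPosSemidef_smul hS hε.le).add ((myPosSemidef_smul hS hε.le).add
          (myPosSemidef_smul (Matrix.PosDef.one).posSemidef (by positivity)))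
      have h3 : 0 ≤ ((Sε * Sε - M) * Sε⁻¹).trace := myTrace_mul_nonneg hdpsd hSεinv
      have h4 : Sε * Sε * Sε⁻¹ = Sε := by
        rw [mul_assoc, Matrix.mul_nonsing_inv _ hdet, mul_one]
      have h5 : ((Sε * Sε - M) * Sε⁻¹).trace = Sε.trace - (M * Sε⁻¹).trace := by
        rw [Matrix.sub_mul, Matrix.trace_sub, h4]
      have h6 : Sε.trace = S.trace + ε * (Fintype.card (Fin d) : ℝ) := by
        rw [hSεdef, Matrix.trace_add, Matrix.trace_smul, Matrix.trace_one]
        simp [smul_eq_mul]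
      rw [htr2] at htr1
      linarith
    have hES : E.trace ≤ S.trace := by
      apply le_of_forall_pos_le_add
      intro ε hε
      have hd1 : (0:ℝ) < (Fintype.card (Fin d) : ℝ) + 1 := by positivity
      have h := hkey (ε / ((Fintype.card (Fin d) : ℝ) + 1)) (by positivity)
      have h2 : ε / ((Fintype.card (Fin d) : ℝ) + 1) * (Fintype.card (Fin d) : ℝ) ≤ ε := by
        rw [div_mul_eq_mul_div, div_le_iff₀ hd1]
        nlinarith [Nat.cast_nonneg (α := ℝ) (Fintype.card (Fin d))]
      linarith
    -- conclude
    have hgel : gelbrich Z Zh = Real.sqrt ((Z + Zh - (2:ℝ) • S).trace) := rfl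
    rw [hgel]
    have htZ : (Z + Zh - (2:ℝ) • S).trace ≤ ρ ^ 2 := by
      have e1 : (Z + Zh - (2:ℝ) • S).trace = Z.trace + Zh.trace - 2 * S.trace := by
        rw [Matrix.trace_sub, Matrix.trace_add, Matrix.trace_smul]; simp [smul_eq_mul]
      have e2 : (Z + Zh - (2:ℝ) • E).trace = Z.trace + Zh.trace - 2 * E.trace := by
        rw [Matrix.trace_sub, Matrix.trace_add, Matrix.trace_smul]; simp [smul_eq_mul]
      rw [e2] at htr
      rw [e1]
      linarith
    calc Real.sqrt ((Z + Zh - (2:ℝ) • S).trace) ≤ Real.sqrt (ρ ^ 2) :=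
          Real.sqrt_le_sqrt htZ
      _ = ρ := by rw [Real.sqrt_sq hρ]
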